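/- Let O be an order in a number field K, and let A, B, and O·λ be invertible ideals of O. Suppose O·λ = ∏_{i∈I} P_i^{m_i} is a factorization into invertible prime ideals P_i with all m_i ≥ 1, and suppose the classes [A] and [B] in Pic(O) satisfy [A] ≡ [B] modulo the subgroup generated by the classes [P_i], i ∈ I, where moreover [A]·[B]⁻¹ is a product of classes [P_i]^{v_i} with all v_i ≥ 0. Then there exist x ∈ (A : B), y ∈ (B : A), and k ≥ 0 with xy = u·λ^k for some unit u of O; consequently, after adjusting x by a unit, xy = λ^k. -/

import Mathlib

noncomputable section

/-- `ℤ[λ]`, the subring of `K` generated by `λ`. -/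
def orderGen {K : Type} [Field K] (lam : K) : Subring K := Subring.closure {lam}

theorem lam_mem_orderGen {K : Type} [Field K] (lam : K) : lam ∈ orderGen lam :=
  Subring.subset_closure (Set.mem_singleton lam)


/-- The fractional-ideal colon `(A : B) = {ξ ∈ K ∣ ξB ⊆ A}` as a subset of `K`. -/
def colonSetF {K : Type} [Field K] {O : Subring K} [IsFractionRing O K]
    (A B : FractionalIdeal (nonZeroDivisors O) K) : Set K :=
  {x : K | ∀ b ∈ B, x * b ∈ A}

section Aux

variable {R K : Type*} [CommRing R] [CommRing K] [Algebra R K] {S : Submonoid R}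

lemma fi_mul_le_one {I J : FractionalIdeal S K} (hI : I ≤ 1) (hJ : J ≤ 1) : I * J ≤ 1 :=
  le_trans (le_trans (mul_le_mul' le_rfl hJ) (le_of_eq (mul_one I))) hI

lemma fi_pow_le_one {I : FractionalIdeal S K} (hI : I ≤ 1) : ∀ n : ℕ, I ^ n ≤ 1
  | 0 => le_of_eq (pow_zero I)
  | n + 1 => by rw [pow_succ]; exact fi_mul_le_one (fi_pow_le_one hI n) hI

lemma fi_prod_le_one {ι : Type*} {s : Finset ι} {f : ι → FractionalIdeal S K}
    (h : ∀ i ∈ s, f i ≤ 1) : ∏ i ∈ s, f i ≤ 1 := by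
  classical
  induction s using Finset.induction with
  | empty => simp
  | insert _ _ hni ih =>
    rw [Finset.prod_insert hni]
    exact fi_mul_le_one (h _ (Finset.mem_insert_self _ _))
      (ih fun i hi => h i (Finset.mem_insert_of_mem hi))

end Aux

set_option synthInstance.maxHeartbeats 1000000 in
set_option maxHeartbeats 1000000 in
/-- Theorem 1 (ii), 'if' direction.  Let `O = ℤ[λ]` be an order in the number field `K`,
let `A`, `B` and `O·λ` be invertible integral ideals of `O`, let
`O·λ = ∏ P_i^{m_i}` be a factorization into invertible prime ideals with all `m_i ≥ 1`,
and suppose `[A] = [B]·∏ [P_i]^{v_i}` in `Pic(O)` with all `v_i ≥ 0`.  Then there are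
`x ∈ (A : B)`, `y ∈ (B : A)` and `k ≥ 0` with `x y = u·λ^k` for a unit `u` of `O`;
after adjusting `x` by a unit, `x y = λ^k`. -/
theorem colon_elements_of_class_congruence {K : Type} [Field K] [NumberField K]
    (lam : K) (hlam : lam ≠ 0) (hint : IsIntegral ℤ lam)
    (hgen : Algebra.adjoin ℚ ({lam} : Set K) = ⊤)
    [IsFractionRing (orderGen lam) K]
    (A B : (FractionalIdeal (nonZeroDivisors (orderGen lam)) K)ˣ)
    (hAint : (A : FractionalIdeal (nonZeroDivisors (orderGen lam)) K) ≤ 1)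
    (hBint : (B : FractionalIdeal (nonZeroDivisors (orderGen lam)) K) ≤ 1)
    (r : ℕ) (P : Fin r → (FractionalIdeal (nonZeroDivisors (orderGen lam)) K)ˣ)
    (hP : ∀ i, ∃ P' : Ideal (orderGen lam), P'.IsPrime ∧
      ((P i : FractionalIdeal (nonZeroDivisors (orderGen lam)) K)) =
        (P' : FractionalIdeal (nonZeroDivisors (orderGen lam)) K))
    (m : Fin r → ℕ) (hm : ∀ i, 1 ≤ m i)
    (hfact : FractionalIdeal.spanSingleton (nonZeroDivisors (orderGen lam)) lam =
      ∏ i, ((P i : FractionalIdeal (nonZeroDivisors (orderGen lam)) K)) ^ (m i))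
    (v : Fin r → ℕ)
    (hv : ClassGroup.mk K A = ClassGroup.mk K B * ∏ i, (ClassGroup.mk K (P i)) ^ (v i)) :
    ∃ x ∈ colonSetF (A : FractionalIdeal (nonZeroDivisors (orderGen lam)) K) B,
      ∃ y ∈ colonSetF (B : FractionalIdeal (nonZeroDivisors (orderGen lam)) K) A,
        ∃ k : ℕ, ∃ u : (orderGen lam)ˣ, x * y = (u : orderGen lam) * lam ^ k ∧
          ∃ x' ∈ colonSetF (A : FractionalIdeal (nonZeroDivisors (orderGen lam)) K) B,
            x' * y = lam ^ k := by
  let R := orderGen lam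
  let S := nonZeroDivisors R
  -- the product of the prime powers, as a unit
  set Q : (FractionalIdeal S K)ˣ := ∏ i, (P i) ^ (v i) with hQ
  -- hv says A * B⁻¹ * Q⁻¹ is principal
  have hmkQ : ClassGroup.mk K Q = ∏ i, (ClassGroup.mk K (P i)) ^ (v i) := by
    rw [hQ, map_prod]
    simp [map_pow]
  have h1 : ClassGroup.mk K (A * B⁻¹ * Q⁻¹) = 1 := by
    rw [map_mul, map_mul, map_inv, map_inv, hmkQ, hv, mul_right_comm,
      mul_inv_cancel_right, mul_inv_cancel]
  have hp : ((A * B⁻¹ * Q⁻¹ : (FractionalIdeal S K)ˣ) : Submodule R K).IsPrincipal :=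
    ClassGroup.mk_eq_one_iff.mp h1
  obtain ⟨c, hc⟩ := hp.principal
  have hcfi : ((A * B⁻¹ * Q⁻¹ : (FractionalIdeal S K)ˣ) : FractionalIdeal S K) =
      FractionalIdeal.spanSingleton S c := by
    apply FractionalIdeal.coeToSubmodule_injective
    simp only [FractionalIdeal.coe_spanSingleton]
    exact hc.trans (FractionalIdeal.coe_spanSingleton S c).symm
  have hcne : c ≠ 0 := by
    intro h
    apply Units.ne_zero (A * B⁻¹ * Q⁻¹)
    rw [hcfi, h, FractionalIdeal.spanSingleton_zero]
  -- A = spanSingleton c * B * Q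
  have hAeq : (A : FractionalIdeal S K) =
      FractionalIdeal.spanSingleton S c * (B : FractionalIdeal S K) * (Q : FractionalIdeal S K) := by
    have huni : A * B⁻¹ * Q⁻¹ * B * Q = A := by
      rw [mul_right_comm (A * B⁻¹) Q⁻¹ B, inv_mul_cancel_right, inv_mul_cancel_right]
    calc (A : FractionalIdeal S K) = ((A * B⁻¹ * Q⁻¹) * B * Q : (FractionalIdeal S K)ˣ) := by
          rw [huni]
      _ = _ := by rw [Units.val_mul, Units.val_mul, hcfi]
  have hQval : (Q : FractionalIdeal S K) =
      ∏ i, ((P i : FractionalIdeal S K)) ^ (v i) := by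
    rw [hQ]
    simp
  -- each P i ≤ 1
  have hPle : ∀ i, (P i : FractionalIdeal S K) ≤ 1 := by
    intro i
    obtain ⟨P', _, hP'⟩ := hP i
    rw [hP']
    exact FractionalIdeal.coeIdeal_le_one
  have hQle : (Q : FractionalIdeal S K) ≤ 1 := by
    rw [hQval]
    exact fi_prod_le_one fun i _ => fi_pow_le_one (hPle i) _
  -- choose k
  set k : ℕ := Finset.univ.sup v with hk
  have hkv : ∀ i, v i ≤ k := fun i => Finset.le_sup (Finset.mem_univ i)
  -- λ^k ∈ Q
  have hlampow : lam ^ k ∈ (Q : FractionalIdeal S K) := by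
    have h2 : FractionalIdeal.spanSingleton S (lam ^ k) ≤ (Q : FractionalIdeal S K) := by
      rw [← FractionalIdeal.spanSingleton_pow, hfact, ← Finset.prod_pow]
      rw [hQval]
      have : ∀ i : Fin r, ((P i : FractionalIdeal S K) ^ m i) ^ k =
          (P i : FractionalIdeal S K) ^ (v i) * (P i : FractionalIdeal S K) ^ (m i * k - v i) := by
        intro i
        rw [← pow_mul, ← pow_add]
        congr 1
        have : v i ≤ m i * k := le_trans (hkv i) (le_mul_of_one_le_left (Nat.zero_le _) (hm i))
        omega
      rw [Finset.prod_congr rfl (fun i _ => this i), Finset.prod_mul_distrib]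
      calc (∏ i, (P i : FractionalIdeal S K) ^ (v i)) *
            ∏ i, (P i : FractionalIdeal S K) ^ (m i * k - v i)
          ≤ (∏ i, (P i : FractionalIdeal S K) ^ (v i)) * 1 :=
            mul_le_mul' le_rfl
              (fi_prod_le_one fun i _ => fi_pow_le_one (hPle i) _)
        _ = _ := mul_one _
    exact h2 (FractionalIdeal.mem_spanSingleton_self S (lam ^ k))
  -- x := c * λ^k
  have hxmem : c * lam ^ k ∈ colonSetF (A : FractionalIdeal S K) B := by
    intro b hb
    rw [hAeq]
    have h3 : c * lam ^ k * b = c * b * lam ^ k := by ring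
    rw [h3]
    exact FractionalIdeal.mul_mem_mul
      (FractionalIdeal.mul_mem_mul (FractionalIdeal.mem_spanSingleton_self S c) hb) hlampow
  -- y := c⁻¹
  have hymem : c⁻¹ ∈ colonSetF (B : FractionalIdeal S K) A := by
    intro a ha
    rw [hAeq] at ha
    have hle : FractionalIdeal.spanSingleton S c * (B : FractionalIdeal S K) *
        (Q : FractionalIdeal S K) ≤ FractionalIdeal.spanSingleton S c * (B : FractionalIdeal S K) := by
      calc _ ≤ FractionalIdeal.spanSingleton S c * (B : FractionalIdeal S K) * 1 :=
            mul_le_mul' le_rfl hQle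
        _ = _ := mul_one _
    have ha' := hle ha
    obtain ⟨b', hb', hab⟩ := FractionalIdeal.mem_singleton_mul.mp ha'
    rw [hab, inv_mul_cancel_left₀ hcne]
    exact hb'
  refine ⟨c * lam ^ k, hxmem, c⁻¹, hymem, k, 1, ?_, c * lam ^ k, hxmem, ?_⟩
  · push_cast
    rw [one_mul]
    field_simp
  · field_simp


end
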